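/- arXiv:2003.03882 — 3 statements merged into one kernel-verified Lean document; each statement's English description precedes it below -/
import Mathlib

section
/- If R : H → ℝ is η-strongly convex on a real inner product space H, meaning R(t·f + (1−t)·f') ≤ t·R(f) + (1−t)·R(f') − (η·t·(1−t)/2)·‖f − f'‖² for all f, f' ∈ H and t ∈ [0,1], then for any functions f₁,…,f_m ∈ H, R((1/m)·∑ᵢ fᵢ) ≤ (1/m)·∑ᵢ R(fᵢ) − (η/(4m²))·∑_{i≠j} ‖fᵢ − fⱼ‖². -/
open RealInnerProductSpace

open Finset in
theorem stmt_1 {H : Type*} [NormedAddCommGroup H] [InnerProductSpace ℝ H]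
    (η : ℝ) (R : H → ℝ)
    (hsc : ∀ f f' : H, ∀ t : ℝ, t ∈ Set.Icc (0 : ℝ) 1 →
      R (t • f + (1 - t) • f') ≤ t * R f + (1 - t) * R f' - η * t * (1 - t) / 2 * ‖f - f'‖ ^ 2)
    (m : ℕ) (hm : 1 ≤ m) (f : Fin m → H) :
    R ((1 / (m : ℝ)) • ∑ i, f i) ≤
      (1 / (m : ℝ)) * ∑ i, R (f i) -
        η / (4 * (m : ℝ) ^ 2) *
          ∑ p ∈ (Finset.univ : Finset (Fin m × Fin m)).filter (fun p => p.1 ≠ p.2),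
            ‖f p.1 - f p.2‖ ^ 2 := by
  have hm0 : (0:ℝ) < (m:ℝ) := by exact_mod_cast Nat.lt_of_lt_of_le Nat.zero_lt_one hm
  have hm0' : (m:ℝ) ≠ 0 := ne_of_gt hm0
  set G : H → ℝ := fun x => R x - η / 2 * ‖x‖ ^ 2 with hG
  have hGdef : ∀ x, G x = R x - η / 2 * ‖x‖ ^ 2 := fun _ => rfl
  -- G is convex
  have hconv : ConvexOn ℝ Set.univ G := by
    refine ⟨convex_univ, ?_⟩
    intro x _ y _ a b ha hb hab
    have hb' : b = 1 - a := by linarith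
    subst hb'
    have key := hsc x y a ⟨ha, by linarith⟩
    have hnorm : ‖a • x + (1 - a) • y‖ ^ 2
        = a * ‖x‖ ^ 2 + (1 - a) * ‖y‖ ^ 2 - a * (1 - a) * ‖x - y‖ ^ 2 := by
      have e1 : ‖a • x + (1 - a) • y‖ ^ 2 = ⟪a • x + (1 - a) • y, a • x + (1 - a) • y⟫ :=
        (real_inner_self_eq_norm_sq _).symm
      have e2 : ‖x - y‖ ^ 2 = ⟪x - y, x - y⟫ := (real_inner_self_eq_norm_sq _).symm
      have e3 : ‖x‖ ^ 2 = ⟪x, x⟫ := (real_inner_self_eq_norm_sq _).symm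
      have e4 : ‖y‖ ^ 2 = ⟪y, y⟫ := (real_inner_self_eq_norm_sq _).symm
      rw [e1, e2, e3, e4]
      simp only [inner_add_add_self, inner_sub_sub_self, real_inner_smul_left,
        real_inner_smul_right, real_inner_comm x y]
      ring
    simp only [hGdef, smul_eq_mul]
    rw [hnorm]
    nlinarith [key]
  -- Jensen
  have hw : ∀ i ∈ (univ : Finset (Fin m)), (0:ℝ) ≤ 1 / (m:ℝ) := fun _ _ => by positivity
  have hw1 : ∑ _i : Fin m, (1 / (m:ℝ)) = 1 := by
    simp [Finset.sum_const, Finset.card_univ]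
    field_simp
  have hmem : ∀ i ∈ (univ : Finset (Fin m)), f i ∈ Set.univ := fun _ _ => trivial
  have jensen := hconv.map_sum_le hw hw1 hmem
  rw [← Finset.smul_sum] at jensen
  simp only [hGdef, smul_eq_mul] at jensen
  -- abbreviations
  set S : H := ∑ i, f i with hS
  set A : ℝ := ∑ i, ‖f i‖ ^ 2 with hA
  have hnormavg : ‖(1 / (m:ℝ)) • S‖ ^ 2 = (1 / (m:ℝ))^2 * ‖S‖ ^ 2 := by
    rw [norm_smul]
    simp [abs_of_pos (show (0:ℝ) < 1/(m:ℝ) by positivity), mul_pow]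
  have hsum : ∑ i, (1 / (m:ℝ)) * (R (f i) - η / 2 * ‖f i‖ ^ 2)
      = (1 / (m:ℝ)) * ∑ i, R (f i) - η / (2 * (m:ℝ)) * A := by
    rw [hA, Finset.mul_sum, Finset.mul_sum, ← Finset.sum_sub_distrib]
    refine Finset.sum_congr rfl fun i _ => by ring
  rw [hsum, hnormavg] at jensen
  -- pairwise sum identity
  have hinner : ∑ j : Fin m, ∑ i : Fin m, ⟪f i, f j⟫ = ‖S‖ ^ 2 := by
    rw [← real_inner_self_eq_norm_sq, hS, inner_sum]
    exact Finset.sum_congr rfl fun j _ => by rw [sum_inner]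
  have hpair : ∑ p ∈ (Finset.univ : Finset (Fin m × Fin m)).filter (fun p => p.1 ≠ p.2),
        ‖f p.1 - f p.2‖ ^ 2
      = 2 * (m:ℝ) * A - 2 * ‖S‖ ^ 2 := by
    have h1 : ∑ p ∈ (Finset.univ : Finset (Fin m × Fin m)).filter (fun p => p.1 ≠ p.2),
          ‖f p.1 - f p.2‖ ^ 2
        = ∑ p : Fin m × Fin m, ‖f p.1 - f p.2‖ ^ 2 := by
      rw [Finset.sum_filter]
      refine Finset.sum_congr rfl fun p _ => ?_
      by_cases h : p.1 = p.2 <;> simp [h]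
    rw [h1, ← Finset.univ_product_univ, Finset.sum_product]
    have h2 : ∀ i j : Fin m, ‖f i - f j‖ ^ 2
        = ‖f i‖ ^ 2 + ‖f j‖ ^ 2 - 2 * ⟪f i, f j⟫ := by
      intro i j
      rw [@norm_sub_sq_real]; ring
    simp only [h2]
    have expand : ∀ i : Fin m, ∑ j : Fin m, (‖f i‖ ^ 2 + ‖f j‖ ^ 2 - 2 * ⟪f i, f j⟫)
        = (m:ℝ) * ‖f i‖ ^ 2 + A - 2 * ∑ j, ⟪f i, f j⟫ := by
      intro i
      rw [Finset.sum_sub_distrib, Finset.sum_add_distrib, ← Finset.mul_sum]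
      simp [hA, Finset.card_univ, mul_comm]
    simp only [expand]
    rw [Finset.sum_sub_distrib, Finset.sum_add_distrib, ← Finset.mul_sum, ← Finset.mul_sum]
    have : ∑ i : Fin m, ∑ j : Fin m, ⟪f i, f j⟫ = ‖S‖ ^ 2 := by
      rw [← hinner, Finset.sum_comm]
    rw [this]
    simp [hA, Finset.card_univ]
    ring
  rw [hpair]
  have hfinal : (1 / (m:ℝ)) * ∑ i, R (f i) - η / (4 * (m:ℝ) ^ 2) * (2 * (m:ℝ) * A - 2 * ‖S‖ ^ 2)
      = ((1 / (m:ℝ)) * ∑ i, R (f i) - η / (2 * (m:ℝ)) * A) + η / 2 * ((1/(m:ℝ))^2 * ‖S‖ ^ 2) := by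
    field_simp
    ring
  rw [hfinal]
  linarith [jensen]
end

section
/- Let R : H → ℝ be differentiable with f_* a minimizer of R over the real Hilbert space H, and suppose the first-order strong convexity inequality R(f) − R(f_*) + (η/2)‖f − f_*‖² ≤ ⟨∇R(f), f − f_*⟩ holds for a given f̂ ∈ H. Let R̂ : H → ℝ be convex and differentiable with f̂ a minimizer of R̂. Then R(f̂) − R(f_*) + (η/2)‖f̂ − f_*‖² ≤ ‖∇R(f̂) − ∇R(f_*) − (∇R̂(f̂) − ∇R̂(f_*))‖·‖f̂ − f_*‖ + ‖∇R(f_*) − ∇R̂(f_*)‖·‖f̂ − f_*‖. -/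
theorem stmt_11 {H : Type*} [NormedAddCommGroup H] [InnerProductSpace ℝ H]
    [CompleteSpace H]
    (η : ℝ) (hη : 0 ≤ η)
    (R Rhat : H → ℝ) (gradR gradRhat : H → H)
    (fhat fstar : H)
    (hfo : R fhat - R fstar + η / 2 * ‖fhat - fstar‖ ^ 2 ≤
      inner ℝ (gradR fhat) (fhat - fstar))
    (hRhatconv : ConvexOn ℝ Set.univ Rhat)
    (hRhatdiff : ∀ x : H, HasGradientAt Rhat (gradRhat x) x)
    (hRhatmin : ∀ f : H, Rhat fhat ≤ Rhat f)
    (hRmin : ∀ f : H, R fstar ≤ R f) :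
    R fhat - R fstar + η / 2 * ‖fhat - fstar‖ ^ 2 ≤
      ‖gradR fhat - gradR fstar - (gradRhat fhat - gradRhat fstar)‖ * ‖fhat - fstar‖ +
        ‖gradR fstar - gradRhat fstar‖ * ‖fhat - fstar‖ := by
  have hmin : IsLocalMin Rhat fhat :=
    ((isMinOn_univ_iff.mpr fun f => hRhatmin f).isLocalMin (by simp))
  have hzero : (InnerProductSpace.toDual ℝ H) (gradRhat fhat) = 0 :=
    hmin.hasFDerivAt_eq_zero (hRhatdiff fhat).hasFDerivAt
  have hg0 : gradRhat fhat = 0 :=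
    (InnerProductSpace.toDual ℝ H).injective (by simp [hzero])
  set d := fhat - fstar with hd
  have hdecomp : gradR fhat =
      (gradR fhat - gradR fstar - (gradRhat fhat - gradRhat fstar)) +
        ((gradR fstar - gradRhat fstar) + gradRhat fhat) := by abel
  have h1 : (inner ℝ (gradR fhat) d : ℝ) =
      inner ℝ (gradR fhat - gradR fstar - (gradRhat fhat - gradRhat fstar)) d +
        (inner ℝ (gradR fstar - gradRhat fstar) d + inner ℝ (gradRhat fhat) d) := by
    conv_lhs => rw [hdecomp]
    rw [inner_add_left, inner_add_left]
  have h2 : (inner ℝ (gradRhat fhat) d : ℝ) = 0 := by simp [hg0]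
  calc R fhat - R fstar + η / 2 * ‖d‖ ^ 2 ≤ inner ℝ (gradR fhat) d := hfo
    _ = inner ℝ (gradR fhat - gradR fstar - (gradRhat fhat - gradRhat fstar)) d +
        inner ℝ (gradR fstar - gradRhat fstar) d := by rw [h1, h2]; ring
    _ ≤ ‖gradR fhat - gradR fstar - (gradRhat fhat - gradRhat fstar)‖ * ‖d‖ +
        ‖gradR fstar - gradRhat fstar‖ * ‖d‖ :=
      add_le_add (real_inner_le_norm _ _) (real_inner_le_norm _ _)
end

section
/- Let f̂₁, …, f̂_m be elements of a real Hilbert space H with (1/(4m²))·∑_{i≠j} ‖f̂ᵢ − f̂ⱼ‖² ≥ τ for some τ ≥ 0 (τ-diversity), and let R : H → ℝ satisfy the η-strong convexity inequality R(tf+(1−t)f') ≤ tR(f)+(1−t)R(f')−(ηt(1−t)/2)‖f−f'‖². Then for f̄ = (1/m)∑ᵢ f̂ᵢ and any f_* ∈ H: R(f̄) − R(f_*) ≤ (1/m)·∑ᵢ (R(f̂ᵢ) − R(f_*)) − η·τ. -/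
open Finset in
theorem stmt_16 {H : Type*} [NormedAddCommGroup H] [InnerProductSpace ℝ H]
    (η τ : ℝ) (hη : 0 ≤ η) (hτ : 0 ≤ τ)
    (m : ℕ) (hm : 1 ≤ m) (fhat : Fin m → H)
    (R : H → ℝ)
    (hsc : ∀ f f' : H, ∀ t : ℝ, t ∈ Set.Icc (0 : ℝ) 1 →
      R (t • f + (1 - t) • f') ≤ t * R f + (1 - t) * R f' - η * t * (1 - t) / 2 * ‖f - f'‖ ^ 2)
    (hdiv : τ ≤ (1 / (4 * (m : ℝ) ^ 2)) *
      ∑ p ∈ (Finset.univ : Finset (Fin m × Fin m)).filter (fun p => p.1 ≠ p.2),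
        ‖fhat p.1 - fhat p.2‖ ^ 2)
    (fstar : H) :
    R ((1 / (m : ℝ)) • ∑ i, fhat i) - R fstar ≤
      (1 / (m : ℝ)) * ∑ i, (R (fhat i) - R fstar) - η * τ := by
  have hm0 : (0:ℝ) < m := by exact_mod_cast hm
  have hmne : (m:ℝ) ≠ 0 := ne_of_gt hm0
  -- strong convexity ⇒ g convex
  have hconv : ConvexOn ℝ Set.univ (fun f => R f - η/2 * ‖f‖^2) := by
    refine ⟨convex_univ, ?_⟩
    intro x _ y _ a b ha hb hab
    have hb' : b = 1 - a := by linarith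
    subst hb'
    have h := hsc x y a ⟨ha, by linarith⟩
    have key : a * ‖x‖^2 + (1-a) * ‖y‖^2 - ‖a • x + (1-a) • y‖^2 = a*(1-a)*‖x-y‖^2 := by
      simp only [← real_inner_self_eq_norm_sq, inner_add_left, inner_add_right, inner_sub_left,
        inner_sub_right, inner_smul_left, inner_smul_right, RCLike.ofReal_real_eq_id, id,
        conj_trivial]
      rw [real_inner_comm y x]
      ring
    have key2 : η/2 * (a * ‖x‖^2 + (1-a) * ‖y‖^2 - ‖a • x + (1-a) • y‖^2)
        = η * a * (1-a) / 2 * ‖x-y‖^2 := by linear_combination (η/2) * key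
    simp only [smul_eq_mul]
    nlinarith [h, key2]
  -- Jensen
  have hw : ∑ _i : Fin m, (1/(m:ℝ)) = 1 := by
    simp [Finset.sum_const, mul_one_div, hmne]
  have hj := hconv.map_sum_le (t := Finset.univ) (w := fun _ => (1/(m:ℝ)))
    (p := fhat) (fun _ _ => by positivity) hw (fun _ _ => Set.mem_univ _)
  rw [show (∑ i, (1/(m:ℝ)) • fhat i) = (1/(m:ℝ)) • ∑ i, fhat i from (Finset.smul_sum).symm] at hj
  -- sum identity
  set S := ∑ p ∈ (Finset.univ : Finset (Fin m × Fin m)).filter (fun p => p.1 ≠ p.2),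
      ‖fhat p.1 - fhat p.2‖ ^ 2 with hSdef
  have hS : S = 2*(m:ℝ)*∑ i, ‖fhat i‖^2 - 2*‖∑ i, fhat i‖^2 := by
    have h1 : S = ∑ p : Fin m × Fin m, ‖fhat p.1 - fhat p.2‖ ^ 2 := by
      rw [hSdef]
      refine Finset.sum_filter_of_ne ?_
      intro p _ hne
      intro h; apply hne; rw [h, sub_self]; simp
    rw [h1, Fintype.sum_prod_type]
    have expand : ∀ x y : H, ‖x - y‖^2 = ‖x‖^2 + ‖y‖^2 - 2 * inner ℝ x y := fun x y => by
      rw [@norm_sub_sq_real]; ring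
    simp only [expand]
    simp only [Finset.sum_sub_distrib, Finset.sum_add_distrib, Finset.sum_const,
      Finset.card_univ, Fintype.card_fin, nsmul_eq_mul, ← Finset.mul_sum, ← inner_sum,
      ← sum_inner]
    rw [← real_inner_self_eq_norm_sq]
    ring
  have hnorm : ‖(1/(m:ℝ)) • ∑ i, fhat i‖^2 = (1/(m:ℝ))^2 * ‖∑ i, fhat i‖^2 := by
    rw [norm_smul]
    simp [abs_of_nonneg (le_of_lt (by positivity : (0:ℝ) < 1/(m:ℝ))), mul_pow]
  -- combine
  have hτ' : η * τ ≤ η * ((1 / (4 * (m:ℝ)^2)) * S) := mul_le_mul_of_nonneg_left hdiv hη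
  have hsum1 : ∑ i, (1/(m:ℝ)) * (R (fhat i) - η/2 * ‖fhat i‖^2)
      = (1/(m:ℝ)) * ∑ i, R (fhat i) - η/(2*m) * ∑ i, ‖fhat i‖^2 := by
    rw [← Finset.mul_sum, Finset.sum_sub_distrib, ← Finset.mul_sum]
    field_simp
  have hsum2 : (1/(m:ℝ)) * ∑ i, (R (fhat i) - R fstar)
      = (1/(m:ℝ)) * ∑ i, R (fhat i) - R fstar := by
    rw [Finset.sum_sub_distrib, Finset.sum_const, Finset.card_univ, Fintype.card_fin,
      nsmul_eq_mul, mul_sub, one_div, inv_mul_cancel_left₀ hmne]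
  simp only [smul_eq_mul] at hj
  rw [hsum1] at hj
  rw [hsum2]
  have hSrel : η * ((1 / (4 * (m:ℝ)^2)) * S)
      = η/(2*m) * ∑ i, ‖fhat i‖^2 - η/2 * ((1/(m:ℝ))^2 * ‖∑ i, fhat i‖^2) := by
    rw [hS]; field_simp; ring
  rw [hnorm] at hj
  linarith [hj, hτ', hSrel]
end
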